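/- Let g : Y → ℝ ∪ {∞} be proper l.s.c. convex on a Euclidean space Y, K : X → Y linear, x̄ ∈ X, v̄ ∈ X, and ȳ ∈ ∂g(Kx̄) with K*ȳ = v̄. Define h(x) = g(Kx). If g satisfies the quadratic growth condition at Kx̄ for ȳ, then Ker d²h(x̄|v̄) ⊆ K⁻¹(T_{∂g*(ȳ)}(Kx̄)), i.e., every w with d²h(x̄|v̄)(w) = 0 satisfies Kw ∈ T_{∂g*(ȳ)}(Kx̄). -/

import Mathlib

open Filter Topology Metric Set
open scoped RealInnerProductSpace NNReal ENNReal

noncomputable section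

/-- Bouligand (contingent) tangent cone. -/
def tanCone {G : Type*} [AddCommGroup G] [Module ℝ G] [TopologicalSpace G]
    (s : Set G) (x : G) : Set G :=
  {w | ∃ (t : ℕ → ℝ) (wk : ℕ → G), (∀ n, 0 < t n) ∧
    Tendsto t atTop (𝓝 0) ∧ Tendsto wk atTop (𝓝 w) ∧ ∀ n, x + t n • wk n ∈ s}

variable {E F : Type*} [NormedAddCommGroup E] [InnerProductSpace ℝ E]
  [NormedAddCommGroup F] [InnerProductSpace ℝ F]

/-- Graph of a set-valued mapping. -/
def gph (S : E → Set F) : Set (E × F) := {p | p.2 ∈ S p.1}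

/-- Graphical derivative. -/
def gder (S : E → Set F) (x : E) (y : F) (w : E) : Set F :=
  {z | (w, z) ∈ tanCone (gph S) (x, y)}

/-- Local closedness of the graph around a point. -/
def LocallyClosedGraph (S : E → Set F) (x : E) (y : F) : Prop :=
  ∃ U ∈ 𝓝 ((x, y) : E × F), IsClosed (U ∩ gph S)

/-- Metric subregularity of a set-valued mapping at `x` for `y`. -/
def MetrSubreg (S : E → Set F) (x : E) (y : F) : Prop :=
  ∃ κ : ℝ≥0, ∃ ε : ℝ, 0 < ε ∧ ∀ x' ∈ ball x ε,
    EMetric.infEdist x' {u | y ∈ S u} ≤ (κ : ℝ≥0∞) * EMetric.infEdist y (S x')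

/-- Convex subdifferential of an extended-real-valued function. -/
def subdiff (φ : E → EReal) (x : E) : Set E :=
  {v | ∀ u, φ x + ((⟪v, u - x⟫ : ℝ) : EReal) ≤ φ u}

/-- Properness. -/
def ProperFn (φ : E → EReal) : Prop := (∀ x, φ x ≠ ⊥) ∧ ∃ x, φ x ≠ ⊤

/-- Convexity via the epigraph. -/
def ConvexFn (φ : E → EReal) : Prop := Convex ℝ {p : E × ℝ | φ p.1 ≤ (p.2 : EReal)}

/-- Fenchel conjugate. -/
def conjFn (φ : E → EReal) (v : E) : EReal := ⨆ x, ((⟪v, x⟫ : ℝ) : EReal) - φ x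

/-- Second subderivative. -/
def secondSubderiv (φ : E → EReal) (x v w : E) : EReal :=
  Filter.liminf (fun p : ℝ × E =>
    (((2 / p.1 ^ 2 : ℝ)) : EReal) *
      (φ (x + p.1 • p.2) - φ x - ((p.1 * ⟪v, p.2⟫ : ℝ) : EReal)))
    ((𝓝[>] (0 : ℝ)) ×ˢ 𝓝 w)

/-- Quadratic growth condition at `x` for `v`. -/
def QuadGrowth (φ : E → EReal) (x v : E) : Prop :=
  ∃ c : ℝ, 0 < c ∧ ∃ ε : ℝ, 0 < ε ∧ ∀ u ∈ ball x ε,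
    φ x + ((⟪v, u - x⟫ + c / 2 * (infDist u {u' | v ∈ subdiff φ u'}) ^ 2 : ℝ) : EReal) ≤ φ u


lemma fin_of_subdiff (g : F → EReal) (hp : ProperFn g) {u yb : F} (h : yb ∈ subdiff g u) :
    ∃ r : ℝ, g u = r := by
  obtain ⟨hbot, x0, htop⟩ := hp
  have h1 := h x0
  have : g u ≠ ⊤ := by
    intro hT
    rw [hT, EReal.top_add_coe] at h1
    exact htop (top_le_iff.mp h1)
  lift g u to ℝ using ⟨this, hbot u⟩ with r
  exact ⟨r, rfl⟩

lemma memA (g : F → EReal) (hp : ProperFn g) {u yb : F} (h : yb ∈ subdiff g u) :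
    u ∈ subdiff (conjFn g) yb := by
  obtain ⟨r, hr⟩ := fin_of_subdiff g hp h
  have hle : conjFn g yb ≤ ((⟪yb, u⟫ - r : ℝ) : EReal) := by
    apply iSup_le
    intro x
    have hx := h x
    rw [hr] at hx
    have h2 : ((r + (⟪yb, x⟫ - ⟪yb, u⟫) : ℝ) : EReal) ≤ g x := by
      rw [← inner_sub_right]; push_cast; exact hx
    calc ((⟪yb, x⟫ : ℝ) : EReal) - g x
        ≤ ((⟪yb, x⟫ : ℝ) : EReal) - ((r + (⟪yb, x⟫ - ⟪yb, u⟫) : ℝ) : EReal) :=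
          EReal.sub_le_sub le_rfl h2
      _ = ((⟪yb, u⟫ - r : ℝ) : EReal) := by
          rw [← EReal.coe_sub, EReal.coe_eq_coe_iff]; ring
  have hge : ((⟪yb, u⟫ - r : ℝ) : EReal) ≤ conjFn g yb := by
    have := le_iSup (fun x => ((⟪yb, x⟫ : ℝ) : EReal) - g x) u
    rw [hr, ← EReal.coe_sub] at this
    exact this
  have heq : conjFn g yb = ((⟪yb, u⟫ - r : ℝ) : EReal) := le_antisymm hle hge
  intro v
  rw [heq]
  have hv : ((⟪v, u⟫ - r : ℝ) : EReal) ≤ conjFn g v := by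
    have := le_iSup (fun x => ((⟪v, x⟫ : ℝ) : EReal) - g x) u
    rw [hr, ← EReal.coe_sub] at this
    exact this
  refine le_trans (le_of_eq ?_) hv
  rw [← EReal.coe_add, EReal.coe_eq_coe_iff]
  have h3 : ⟪u, v - yb⟫ = ⟪v, u⟫ - ⟪yb, u⟫ := by
    rw [inner_sub_right, real_inner_comm u v, real_inner_comm u yb]
  rw [h3]; ring


/-- `Ker d²h(xb|vb) ⊆ K⁻¹(T_{∂g*(yb)}(Kxb))` for `h = g ∘ K` under the
quadratic growth condition of `g` at `Kxb` for `yb`. -/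
theorem stmt13 {E F : Type*} [NormedAddCommGroup E] [InnerProductSpace ℝ E]
    [NormedAddCommGroup F] [InnerProductSpace ℝ F]
    [FiniteDimensional ℝ E] [FiniteDimensional ℝ F]
    (g : F → EReal) (hproper : ProperFn g) (hlsc : LowerSemicontinuous g)
    (hconv : ConvexFn g) (K : E →ₗ[ℝ] F) (xb vb : E) (yb : F)
    (hyb : yb ∈ subdiff g (K xb)) (hadj : LinearMap.adjoint K yb = vb)
    (hqg : QuadGrowth g (K xb) yb) :
    ∀ w : E, secondSubderiv (fun x => g (K x)) xb vb w = 0 →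
      K w ∈ tanCone (subdiff (conjFn g) yb) (K xb) := by
  intro w hw
  obtain ⟨c, hc, ε, hε, hQG⟩ := hqg
  set S := {u' | yb ∈ subdiff g u'} with hSdef
  have hSne : S.Nonempty := ⟨K xb, hyb⟩
  obtain ⟨r, hr⟩ := fin_of_subdiff g hproper hyb
  set l := (𝓝[>] (0 : ℝ)) ×ˢ (𝓝 w) with hldef
  have hw' : Filter.liminf (fun p : ℝ × E =>
      (((2 / p.1 ^ 2 : ℝ)) : EReal) *
        (g (K (xb + p.1 • p.2)) - g (K xb) - ((p.1 * ⟪vb, p.2⟫ : ℝ) : EReal))) l = 0 := hw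
  -- pointwise lower bound
  have hpt : ∀ p : ℝ × E, 0 < p.1 → ‖p.1 • K p.2‖ < ε →
      ((c * (infDist (K xb + p.1 • K p.2) S / p.1) ^ 2 : ℝ) : EReal) ≤
      ((2 / p.1 ^ 2 : ℝ) : EReal) *
        (g (K (xb + p.1 • p.2)) - g (K xb) - ((p.1 * ⟪vb, p.2⟫ : ℝ) : EReal)) := by
    rintro ⟨t, w'⟩ ht hnorm
    have hKeq : K (xb + t • w') = K xb + t • K w' := by
      rw [map_add, map_smul]
    have hinner : ⟪vb, w'⟫ = ⟪yb, K w'⟫ := by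
      rw [← hadj, LinearMap.adjoint_inner_left]
    have hmem : K xb + t • K w' ∈ ball (K xb) ε := by
      rw [mem_ball, dist_eq_norm]
      simpa using hnorm
    have hQ := hQG _ hmem
    rw [hr] at hQ
    have hsub : K xb + t • K w' - K xb = t • K w' := by abel
    rw [hsub, real_inner_smul_right] at hQ
    set d := infDist (K xb + t • K w') S with hd
    rcases eq_or_ne (g (K xb + t • K w')) ⊤ with hT | hT
    · rw [hKeq, hT, hr, EReal.top_sub_coe, EReal.top_sub_coe,
        EReal.coe_mul_top_of_pos (by positivity)]
      exact le_top
    · have hnb := hproper.1 (K xb + t • K w')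
      lift (g (K xb + t • K w')) to ℝ using ⟨hT, hnb⟩ with s hs
      rw [← EReal.coe_add, EReal.coe_le_coe_iff] at hQ
      rw [hKeq, ← hs, hr, hinner, ← EReal.coe_sub, ← EReal.coe_sub, ← EReal.coe_mul,
        EReal.coe_le_coe_iff]
      have hkey : c / 2 * d ^ 2 ≤ s - r - t * ⟪yb, K w'⟫ := by linarith
      calc c * (d / t) ^ 2 = 2 / t ^ 2 * (c / 2 * d ^ 2) := by
            field_simp
        _ ≤ 2 / t ^ 2 * (s - r - t * ⟪yb, K w'⟫) :=
            mul_le_mul_of_nonneg_left hkey (by positivity)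
  -- eventual facts
  have hE1 : ∀ᶠ p : ℝ × E in l, 0 < p.1 := by
    have hmem : Ioi (0 : ℝ) ×ˢ (univ : Set E) ∈ l :=
      prod_mem_prod self_mem_nhdsWithin univ_mem
    filter_upwards [hmem] with p hp using hp.1
  have hfst : Tendsto (fun p : ℝ × E => p.1) l (𝓝 0) :=
    tendsto_fst.mono_right nhdsWithin_le_nhds
  have hKcont : Continuous K := K.continuous_of_finiteDimensional
  have hsnd : Tendsto (fun p : ℝ × E => p.2) l (𝓝 w) := tendsto_snd
  have htend : Tendsto (fun p : ℝ × E => p.1 • K p.2) l (𝓝 0) := by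
    have := hfst.smul ((hKcont.tendsto w).comp hsnd)
    simpa using this
  have hE2 : ∀ᶠ p : ℝ × E in l, ‖p.1 • K p.2‖ < ε := by
    filter_upwards [htend (Metric.ball_mem_nhds 0 hε)] with p hp
    rwa [Set.mem_preimage, mem_ball_zero_iff] at hp
  -- extraction for each n
  have key : ∀ n : ℕ, ∃ p : ℝ × E, 0 < p.1 ∧ p.1 < 1 / (n + 1) ∧ dist p.2 w < 1 / (n + 1) ∧
      infDist (K xb + p.1 • K p.2) S < p.1 * (1 / (n + 1)) := by
    intro n
    have hn : (0 : ℝ) < 1 / (n + 1) := by positivity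
    have hE3 : ∀ᶠ p : ℝ × E in l, p.1 < 1 / (n + 1) := by
      filter_upwards [hfst (Iio_mem_nhds hn)] with p hp
      exact hp
    have hE4 : ∀ᶠ p : ℝ × E in l, dist p.2 w < 1 / (n + 1) := by
      filter_upwards [hsnd (Metric.ball_mem_nhds w hn)] with p hp
      exact hp
    have hfr : ∃ᶠ p : ℝ × E in l, (fun p : ℝ × E =>
        (((2 / p.1 ^ 2 : ℝ)) : EReal) *
          (g (K (xb + p.1 • p.2)) - g (K xb) - ((p.1 * ⟪vb, p.2⟫ : ℝ) : EReal))) p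
        < ((c * (1 / (n + 1)) ^ 2 : ℝ) : EReal) := by
      refine Filter.frequently_lt_of_liminf_lt ?_ ?_
      · exact ⟨⊤, fun a _ => le_top⟩
      · rw [hw']
        exact_mod_cast (by positivity : (0 : ℝ) < c * (1 / (n + 1)) ^ 2)
    obtain ⟨p, hΦ, hp1, hp2, hp3, hp4⟩ :=
      (hfr.and_eventually (hE1.and (hE2.and (hE3.and hE4)))).exists
    refine ⟨p, hp1, hp3, hp4, ?_⟩
    have hb := hpt p hp1 hp2
    have hlt := lt_of_le_of_lt hb hΦ
    rw [EReal.coe_lt_coe_iff] at hlt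
    set d := infDist (K xb + p.1 • K p.2) S with hd
    have hd0 : 0 ≤ d := infDist_nonneg
    have h1 : (d / p.1) ^ 2 < (1 / (n + 1)) ^ 2 := by
      exact lt_of_mul_lt_mul_left hlt hc.le
    have h2 : d / p.1 < 1 / (n + 1) := by
      nlinarith [div_nonneg hd0 hp1.le]
    rw [div_lt_iff₀ hp1] at h2
    linarith [h2]
  choose p hp1 hp2 hp3 hp4 using key
  have hune : ∀ n : ℕ, ∃ u ∈ S, dist (K xb + (p n).1 • K (p n).2) u < (p n).1 * (1 / (n + 1)) :=
    fun n => (Metric.infDist_lt_iff hSne).mp (hp4 n)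
  choose u huS hud using hune
  set t : ℕ → ℝ := fun n => (p n).1 with htdef
  set z : ℕ → F := fun n => (t n)⁻¹ • (u n - K xb) with hzdef
  have htz : ∀ n, K xb + t n • z n = u n := by
    intro n
    rw [hzdef]
    simp only
    rw [smul_inv_smul₀ (ne_of_gt (hp1 n))]
    abel
  refine ⟨t, z, hp1, ?_, ?_, ?_⟩
  · exact squeeze_zero (fun n => (hp1 n).le) (fun n => (hp2 n).le)
      tendsto_one_div_add_atTop_nhds_zero_nat
  · -- z → K w
    have hz : ∀ n, ‖z n - K ((p n).2)‖ ≤ 1 / (n + 1) := by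
      intro n
      have hne : t n ≠ 0 := ne_of_gt (hp1 n)
      have heq : z n - K ((p n).2) = (t n)⁻¹ • (u n - (K xb + t n • K ((p n).2))) := by
        rw [hzdef]
        simp only
        rw [smul_sub, smul_sub]
        rw [smul_add, inv_smul_smul₀ hne]
        abel
      rw [heq, norm_smul, norm_inv, Real.norm_eq_abs, abs_of_pos (hp1 n), ← dist_eq_norm']
      rw [inv_mul_le_iff₀ (hp1 n)]
      have := (hud n).le
      calc dist (K xb + t n • K ((p n).2)) (u n) ≤ (p n).1 * (1 / (n + 1)) := this
        _ = t n * (1 / (↑n + 1)) := by ring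
    have h1 : Tendsto (fun n => z n - K ((p n).2)) atTop (𝓝 0) :=
      squeeze_zero_norm hz tendsto_one_div_add_atTop_nhds_zero_nat
    have h2 : Tendsto (fun n => (p n).2) atTop (𝓝 w) := by
      rw [tendsto_iff_dist_tendsto_zero]
      exact squeeze_zero (fun n => dist_nonneg) (fun n => (hp3 n).le)
        tendsto_one_div_add_atTop_nhds_zero_nat
    have h3 : Tendsto (fun n => K ((p n).2)) atTop (𝓝 (K w)) :=
      (hKcont.tendsto w).comp h2
    have := h1.add h3
    simpa using this
  · intro n
    rw [htz n]
    exact memA g hproper (huS n)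


end
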